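/- Let A, B ∈ ℂ^{n×p}. Then the matrix [A conj(A)] [B conj(B)]†, where [A conj(A)] denotes the n×2p matrix with blocks A and the entrywise complex conjugate of A, is a real matrix (all entries have zero imaginary part). -/

import Mathlib

open Matrix

/-- `Xd` is the Moore–Penrose pseudoinverse of `X` (the four Penrose conditions). -/
def IsMoorePenroseInv {m n : Type*} [Fintype m] [Fintype n]
    (X : Matrix m n ℂ) (Xd : Matrix n m ℂ) : Prop :=
  X * Xd * X = X ∧ Xd * X * Xd = Xd ∧ (X * Xd)ᴴ = X * Xd ∧ (Xd * X)ᴴ = Xd * X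

lemma mp_unique {m n : Type*} [Fintype m] [Fintype n]
    {X : Matrix m n ℂ} {Y Z : Matrix n m ℂ}
    (hY : IsMoorePenroseInv X Y) (hZ : IsMoorePenroseInv X Z) : Y = Z := by
  obtain ⟨hY1, hY2, hY3, hY4⟩ := hY
  obtain ⟨hZ1, hZ2, hZ3, hZ4⟩ := hZ
  have hXY : X * Y = X * Z := by
    calc X * Y = (X * Y)ᴴ := hY3.symm
    _ = Yᴴ * Xᴴ := conjTranspose_mul X Y
    _ = Yᴴ * (X * Z * X)ᴴ := by rw [hZ1]
    _ = Yᴴ * (Xᴴ * (X * Z)ᴴ) := by rw [conjTranspose_mul (X * Z) X]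
    _ = Yᴴ * Xᴴ * (X * Z)ᴴ := by rw [Matrix.mul_assoc]
    _ = (X * Y)ᴴ * (X * Z)ᴴ := by rw [← conjTranspose_mul X Y]
    _ = X * Y * (X * Z) := by rw [hY3, hZ3]
    _ = X * Y * X * Z := by rw [← Matrix.mul_assoc (X * Y) X Z]
    _ = X * Z := by rw [hY1]
  have hYX : Y * X = Z * X := by
    calc Y * X = (Y * X)ᴴ := hY4.symm
    _ = Xᴴ * Yᴴ := conjTranspose_mul Y X
    _ = (X * (Z * X))ᴴ * Yᴴ := by rw [← Matrix.mul_assoc, hZ1]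
    _ = (Z * X)ᴴ * Xᴴ * Yᴴ := by rw [conjTranspose_mul X (Z * X)]
    _ = (Z * X)ᴴ * (Y * X)ᴴ := by rw [Matrix.mul_assoc, ← conjTranspose_mul Y X]
    _ = Z * X * (Y * X) := by rw [hY4, hZ4]
    _ = Z * (X * Y * X) := by rw [Matrix.mul_assoc, ← Matrix.mul_assoc X Y X]
    _ = Z * X := by rw [hY1]
  calc Y = Y * X * Y := hY2.symm
  _ = Z * X * Y := by rw [hYX]
  _ = Z * (X * Y) := by rw [Matrix.mul_assoc]
  _ = Z * (X * Z) := by rw [hXY]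
  _ = Z * X * Z := by rw [← Matrix.mul_assoc]
  _ = Z := hZ2

lemma map_conj_mul {m n k : Type*} [Fintype n] (X : Matrix m n ℂ) (Y : Matrix n k ℂ) :
    (X * Y).map (starRingEnd ℂ) = X.map (starRingEnd ℂ) * Y.map (starRingEnd ℂ) :=
  Matrix.map_mul

lemma conjTranspose_map_conj {m n : Type*} (X : Matrix m n ℂ) :
    (X.map (starRingEnd ℂ))ᴴ = Xᴴ.map (starRingEnd ℂ) := by
  ext i j; simp

theorem fromColumns_conj_mul_pinv_isReal
    {n p : ℕ} (A B : Matrix (Fin n) (Fin p) ℂ)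
    (Bd : Matrix (Fin p ⊕ Fin p) (Fin n) ℂ)
    (hBd : IsMoorePenroseInv (fromCols B (B.map (starRingEnd ℂ))) Bd) :
    ∀ i j, ((fromCols A (A.map (starRingEnd ℂ)) * Bd) i j).im = 0 := by
  set C := fromCols B (B.map (starRingEnd ℂ)) with hC
  set S : Matrix (Fin p ⊕ Fin p) (Fin p ⊕ Fin p) ℂ := fromBlocks 0 1 1 0 with hS
  have hSS : S * S = 1 := by
    simp [hS, fromBlocks_multiply, ← fromBlocks_one]
  have hSH : Sᴴ = S := by
    simp [hS, fromBlocks_conjTranspose]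
  have hCS : C.map (starRingEnd ℂ) = C * S := by
    rw [hC, hS, fromCols_mul_fromBlocks]
    ext i (j | j) <;> simp [fromCols]
  obtain ⟨h1, h2, h3, h4⟩ := hBd
  have hconj : IsMoorePenroseInv (C.map (starRingEnd ℂ)) (Bd.map (starRingEnd ℂ)) := by
    refine ⟨?_, ?_, ?_, ?_⟩ <;>
      simp only [← map_conj_mul, conjTranspose_map_conj, h1, h2, h3, h4]
  have hcb : C * S * (S * Bd) = C * Bd := by
    rw [Matrix.mul_assoc C S, ← Matrix.mul_assoc S S, hSS, Matrix.one_mul]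
  have hswap : IsMoorePenroseInv (C * S) (S * Bd) := by
    refine ⟨?_, ?_, ?_, ?_⟩
    · rw [hcb, ← Matrix.mul_assoc (C * Bd) C S, h1]
    · rw [Matrix.mul_assoc (S * Bd) (C * S) (S * Bd)]
      rw [show (C * S) * (S * Bd) = C * Bd from hcb]
      rw [Matrix.mul_assoc S Bd (C * Bd), ← Matrix.mul_assoc Bd C Bd, h2]
    · rw [hcb, h3]
    · have h'' : S * Bd * (C * S) = S * (Bd * C) * S := by
        rw [Matrix.mul_assoc S Bd (C * S), ← Matrix.mul_assoc Bd C S, ← Matrix.mul_assoc S (Bd * C) S]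
      rw [h'', conjTranspose_mul (S * (Bd * C)) S, conjTranspose_mul S (Bd * C),
        hSH, h4, ← Matrix.mul_assoc]
  have hBdconj : Bd.map (starRingEnd ℂ) = S * Bd := by
    rw [hCS] at hconj
    exact mp_unique hconj hswap
  have hAS : (fromCols A (A.map (starRingEnd ℂ))).map (starRingEnd ℂ)
      = fromCols A (A.map (starRingEnd ℂ)) * S := by
    rw [hS, fromCols_mul_fromBlocks]
    ext i (j | j) <;> simp [fromCols]
  have key : (fromCols A (A.map (starRingEnd ℂ)) * Bd).map (starRingEnd ℂ)
      = fromCols A (A.map (starRingEnd ℂ)) * Bd := by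
    rw [map_conj_mul, hAS, hBdconj, Matrix.mul_assoc, ← Matrix.mul_assoc S, hSS, Matrix.one_mul]
  intro i j
  have h := congrFun (congrFun key i) j
  rw [Matrix.map_apply] at h
  exact Complex.conj_eq_iff_im.mp h
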